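/- arXiv:1803.01917 — 2 statements merged into one kernel-verified Lean document; each statement's English description precedes it below -/
import Mathlib

section
/- Let Γ be a finitely generated group acting on A^Γ by left translations L_γ(x)(δ) = x(δγ), where A = {0,1}^ℕ × (ℕ ∪ {∞}). If y ∈ A^Γ is such that the Cantor coordinates γ ↦ C(y(γ)) form a proper Cantor labeling of Γ, then the action of Γ on the orbit closure of y is free. -/
/-- Word metric of the (right) Cayley graph `Cay(Γ, S)`. -/
noncomputable def wordDist {Γ : Type*} [Group Γ] (S : Set Γ) (γ δ : Γ) : ℕ :=
  sInf {n | ∃ l : List Γ, (∀ s ∈ l, s ∈ S) ∧ l.length = n ∧ l.prod * γ = δ}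

/-- A proper Cantor labeling. -/
def IsProperCantorLabeling {Γ : Type*} [Group Γ] (d : Γ → Γ → ℕ) (lab : Γ → ℕ → Bool) : Prop :=
  ∀ r : ℕ, 0 < r → ∃ Sr : ℕ, 0 < Sr ∧ ∀ γ δ : Γ, 0 < d γ δ → d γ δ ≤ r →
    ∃ i < Sr, lab γ i ≠ lab δ i

/-- `A = {0,1}^ℕ × (ℕ ∪ {∞})`, with `ℕ ∪ {∞}` the one-point compactification of `ℕ`. -/
abbrev CantorHeightSpace : Type := (ℕ → Bool) × OnePoint ℕ

/-- The left translation action on the Bernoulli space `A^Γ`: `L_γ(x)(δ) = x(δγ)`. -/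
def Lact {Γ : Type*} [Group Γ] (γ : Γ) (x : Γ → CantorHeightSpace) : Γ → CantorHeightSpace :=
  fun δ => x (δ * γ)

/-- The orbit closure of `y` in the product topology on `A^Γ`. -/
def orbitClosure {Γ : Type*} [Group Γ] (y : Γ → CantorHeightSpace) :
    Set (Γ → CantorHeightSpace) :=
  closure {x | ∃ γ : Γ, x = Lact γ y}

/-- The word metric is right-invariant. -/
lemma wordDist_right_invariant {Γ : Type*} [Group Γ] (S : Set Γ) (γ δ η : Γ) :
    wordDist S (γ * η) (δ * η) = wordDist S γ δ := by
  unfold wordDist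
  congr 1
  ext n
  constructor
  · rintro ⟨l, h1, h2, h3⟩
    refine ⟨l, h1, h2, ?_⟩
    rw [← mul_assoc] at h3
    exact mul_right_cancel h3
  · rintro ⟨l, h1, h2, h3⟩
    exact ⟨l, h1, h2, by rw [← mul_assoc, h3]⟩

/-- The defining set of the word metric is nonempty when `S` is a symmetric generating set. -/
lemma wordDist_set_nonempty {Γ : Type*} [Group Γ] (S : Set Γ)
    (hSsym : ∀ s ∈ S, s⁻¹ ∈ S) (hSgen : Subgroup.closure S = ⊤) (γ δ : Γ) :
    {n | ∃ l : List Γ, (∀ s ∈ l, s ∈ S) ∧ l.length = n ∧ l.prod * γ = δ}.Nonempty := by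
  have hmem : δ * γ⁻¹ ∈ Submonoid.closure (S ∪ S⁻¹) := by
    rw [← Subgroup.closure_toSubmonoid, hSgen]
    trivial
  obtain ⟨l, hl, hprod⟩ := Submonoid.exists_list_of_mem_closure hmem
  refine ⟨l.length, l, ?_, rfl, by rw [hprod, inv_mul_cancel_right]⟩
  intro s hs
  rcases hl s hs with h | h
  · exact h
  · simpa using hSsym _ (Set.mem_inv.mp h)

/-- if the Cantor coordinates of `y ∈ A^Γ` form a proper Cantor labeling of `Γ`,
then the translation action of `Γ` on the orbit closure of `y` is free. -/
theorem stmt2 {Γ : Type*} [Group Γ] (S : Set Γ)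
    (hSfin : S.Finite) (hSsym : ∀ s ∈ S, s⁻¹ ∈ S) (hSgen : Subgroup.closure S = ⊤)
    (y : Γ → CantorHeightSpace)
    (hproper : IsProperCantorLabeling (wordDist S) (fun γ => (y γ).1)) :
    ∀ x ∈ orbitClosure y, ∀ γ : Γ, γ ≠ 1 → Lact γ x ≠ x := by
  intro x hx γ hγ hfix
  -- From the fixed point equation, `x γ = x 1`.
  have hxγ : x γ = x 1 := by
    have := congrFun hfix 1
    simpa [Lact] using this
  -- The word distance from 1 to γ is positive.
  set r := wordDist S 1 γ with hr
  have hne := wordDist_set_nonempty S hSsym hSgen 1 γ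
  have hrpos : 0 < r := by
    rcases Nat.eq_zero_or_pos r with h0 | h
    · exfalso
      have hmem : r ∈ {n | ∃ l : List Γ, (∀ s ∈ l, s ∈ S) ∧ l.length = n ∧ l.prod * 1 = γ} :=
        Nat.sInf_mem hne
      rw [h0] at hmem
      have this := hmem
      obtain ⟨l, -, hlen, hprod⟩ := this
      apply hγ
      have : l = [] := List.length_eq_zero_iff.mp hlen
      simpa [this] using hprod.symm
    · exact h
  obtain ⟨Sr, hSrpos, H⟩ := hproper r hrpos
  -- The closed set where labels at `1` and `γ` differ within the first `Sr` coordinates.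
  set U : Set (Γ → CantorHeightSpace) :=
    {z | ∃ i < Sr, (z 1).1 i ≠ (z γ).1 i} with hU
  have hUclosed : IsClosed U := by
    have : U = ⋃ i ∈ Finset.range Sr,
        (fun z : Γ → CantorHeightSpace => (((z 1).1 i), ((z γ).1 i))) ⁻¹'
          {p : Bool × Bool | p.1 ≠ p.2} := by
      ext z
      simp [hU, Finset.mem_range]
    rw [this]
    apply Set.Finite.isClosed_biUnion (Finset.finite_toSet _)
    intro i _
    refine IsClosed.preimage ?_ (isClosed_discrete _)
    exact ((continuous_apply i).comp (continuous_fst.comp (continuous_apply (1 : Γ)))).prodMk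
      ((continuous_apply i).comp (continuous_fst.comp (continuous_apply γ)))
  -- Every orbit point lies in `U`.
  have horb : {z | ∃ η : Γ, z = Lact η y} ⊆ U := by
    rintro z ⟨η, rfl⟩
    have hdist : wordDist S η (γ * η) = r := by
      have := wordDist_right_invariant S 1 γ η
      simpa using this
    obtain ⟨i, hi, hne'⟩ := H η (γ * η) (by rw [hdist]; exact hrpos) (by rw [hdist])
    exact ⟨i, hi, by simpa [Lact] using hne'⟩
  -- Hence `x ∈ U`, contradicting `x γ = x 1`.
  have hxU : x ∈ U := closure_minimal horb hUclosed hx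
  obtain ⟨i, -, hne'⟩ := hxU
  exact hne' (by rw [hxγ])
end

section
/- Let z ∈ A^Γ be a proper landscape and x' an element of totally finite height in the orbit closure of z. Then K_{x'} ⊇ K_z, J_{x'} ⊇ J_z, and I_{x'} ⊆ I_z, where for an element x, K_x is the set of labeled balls B (of radius m) never realized as Θ^m_x(γ), J_x is the set of labeled balls B realized within uniformly bounded distance K_B of every height-1 point of x, and I_x is the complement of K_x ∪ J_x in the set of all labeled balls. -/
open scoped Pointwise

/-- An element of `A^Γ` is of totally finite height if no height coordinate is `∞`. -/
def TotallyFinite {Γ : Type*} [Group Γ] (x : Γ → CantorHeightSpace) : Prop :=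
  ∀ γ : Γ, (x γ).2 ≠ OnePoint.infty

/-- The labeled ball (window) `Θ^m_x(γ)`: it records, for each `δ` in the ball of radius `m`
around the identity, the `m`-truncated Cantor coordinate and the height of `x` at `δγ`. -/
def window {Γ : Type*} [Group Γ] (d : Γ → Γ → ℕ) (m : ℕ) (x : Γ → CantorHeightSpace)
    (γ : Γ) : Γ → Option CantorHeightSpace := fun δ =>
  if d 1 δ ≤ m then
    some (fun i => if i < m then (x (δ * γ)).1 i else false, (x (δ * γ)).2)
  else none

/-- The `z`-local set `(Θ^m_z)^{-1}(S)` determined by a set `S` of labeled balls. -/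
def localSet {Γ : Type*} [Group Γ] (d : Γ → Γ → ℕ) (m : ℕ) (z : Γ → CantorHeightSpace)
    (S : Set (Γ → Option CantorHeightSpace)) : Set Γ :=
  {γ | window d m z γ ∈ S}

/-- The four landscape conditions for an element of totally finite height. -/
def IsLandscape {Γ : Type*} [Group Γ] (d : Γ → Γ → ℕ) (z : Γ → CantorHeightSpace) : Prop :=
  TotallyFinite z ∧
  (∀ γ δ : Γ, ∀ a b : ℕ, d γ δ = 1 → (z γ).2 = (a : OnePoint ℕ) →
    (z δ).2 = (b : OnePoint ℕ) → |(a : ℤ) - (b : ℤ)| ≤ 1) ∧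
  (∀ n : ℕ, 1 ≤ n → ∃ M : ℕ, 1 < M ∧ ∀ γ : Γ, (z γ).2 = (n : OnePoint ℕ) →
    ∃ δ : Γ, d δ γ ≤ M ∧ (z δ).2 = ((1 : ℕ) : OnePoint ℕ)) ∧
  (∀ l : ℕ, 1 ≤ l → ∃ N : ℕ, 1 < N ∧ ∀ γ : Γ, (z γ).2 = ((1 : ℕ) : OnePoint ℕ) →
    l ≤ {δ : Γ | d γ δ ≤ N ∧ (z δ).2 = ((1 : ℕ) : OnePoint ℕ)}.ncard) ∧
  (∀ m : ℕ, 1 ≤ m → ∃ Sm : ℕ, 1 < Sm ∧ ∀ δ : Γ, ∃ κ : Γ, d δ κ ≤ Sm ∧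
    ∃ h : ℕ, m ≤ h ∧ (z κ).2 = (h : OnePoint ℕ))

/-- A proper landscape: a landscape whose Cantor coordinates form a proper Cantor
labeling. -/
def IsProperLandscape {Γ : Type*} [Group Γ] (d : Γ → Γ → ℕ) (z : Γ → CantorHeightSpace) :
    Prop :=
  IsLandscape d z ∧ IsProperCantorLabeling d (fun γ => (z γ).1)

/-- `K_x`: the labeled balls (of radius `B.1`) never realized as a window of `x`. -/
def Kset {Γ : Type*} [Group Γ] (d : Γ → Γ → ℕ) (x : Γ → CantorHeightSpace) :
    Set (ℕ × (Γ → Option CantorHeightSpace)) :=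
  {B | ∀ γ : Γ, window d B.1 x γ ≠ B.2}

/-- `J_x`: the labeled balls realized within a uniformly bounded distance of every
height-one point of `x`. -/
def Jset {Γ : Type*} [Group Γ] (d : Γ → Γ → ℕ) (x : Γ → CantorHeightSpace) :
    Set (ℕ × (Γ → Option CantorHeightSpace)) :=
  {B | ∃ KB : ℕ, ∀ γ : Γ, (x γ).2 = ((1 : ℕ) : OnePoint ℕ) →
    ∃ δ : Γ, d δ γ ≤ KB ∧ window d B.1 x δ = B.2}

/-- `I_x = ℬ \ (K_x ∪ J_x)`. -/
def Iset {Γ : Type*} [Group Γ] (d : Γ → Γ → ℕ) (x : Γ → CantorHeightSpace) :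
    Set (ℕ × (Γ → Option CantorHeightSpace)) :=
  (Kset d x ∪ Jset d x)ᶜ

section Aux

variable {Γ : Type*} [Group Γ]

/-- Right invariance of the word metric. -/
lemma wordDist_right_inv (S : Set Γ) (γ δ η : Γ) :
    wordDist S (γ * η) (δ * η) = wordDist S γ δ := by
  unfold wordDist
  congr 1
  ext n
  constructor
  · rintro ⟨l, h1, h2, h3⟩
    refine ⟨l, h1, h2, ?_⟩
    rw [← mul_assoc] at h3
    exact mul_right_cancel h3
  · rintro ⟨l, h1, h2, h3⟩
    exact ⟨l, h1, h2, by rw [← mul_assoc, h3]⟩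

/-- Every group element is a product of a list of generators. -/
lemma exists_list_of_gen (S : Set Γ) (hSsym : ∀ s ∈ S, s⁻¹ ∈ S)
    (hSgen : Subgroup.closure S = ⊤) (δ : Γ) :
    ∃ l : List Γ, (∀ s ∈ l, s ∈ S) ∧ l.prod = δ := by
  have hδ : δ ∈ (Subgroup.closure S).toSubmonoid := by
    rw [hSgen]; trivial
  rw [Subgroup.closure_toSubmonoid] at hδ
  obtain ⟨l, hl, hprod⟩ := Submonoid.exists_list_of_mem_closure hδ
  refine ⟨l, fun s hs => ?_, hprod⟩
  rcases hl s hs with h | h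
  · exact h
  · have := hSsym _ (Set.mem_inv.mp h)
    simpa using this

/-- Lists over `S` of bounded length form a finite set. -/
lemma listset_finite (S : Set Γ) (hSfin : S.Finite) (m : ℕ) :
    {l : List Γ | (∀ s ∈ l, s ∈ S) ∧ l.length ≤ m}.Finite := by
  induction m with
  | zero =>
    apply Set.Finite.subset (Set.finite_singleton ([] : List Γ))
    rintro l ⟨-, hlen⟩
    simp [List.length_eq_zero_iff.mp (Nat.le_zero.mp hlen)]
  | succ m ih =>
    apply Set.Finite.subset ((Set.finite_singleton ([] : List Γ)).union
      (Set.Finite.image2 (fun s l => s :: l) hSfin ih))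
    rintro l ⟨hmem, hlen⟩
    cases l with
    | nil => exact Or.inl rfl
    | cons a t =>
      refine Or.inr ?_
      exact Set.mem_image2.mpr ⟨a, hmem a (by simp), t,
        ⟨fun s hs => hmem s (by simp [hs]), by simpa using hlen⟩, rfl⟩

/-- Balls around a point are finite. -/
lemma ball_finite (S : Set Γ) (hSfin : S.Finite) (hSsym : ∀ s ∈ S, s⁻¹ ∈ S)
    (hSgen : Subgroup.closure S = ⊤) (γ : Γ) (r : ℕ) :
    {δ : Γ | wordDist S δ γ ≤ r}.Finite := by
  apply Set.Finite.subset
    (Set.Finite.image (fun l : List Γ => l.prod⁻¹ * γ) (listset_finite S hSfin r))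
  intro δ hδ
  have hne : {n | ∃ l : List Γ, (∀ s ∈ l, s ∈ S) ∧ l.length = n ∧ l.prod * δ = γ}.Nonempty := by
    obtain ⟨l, hl, hp⟩ := exists_list_of_gen S hSsym hSgen (γ * δ⁻¹)
    exact ⟨l.length, l, hl, rfl, by rw [hp]; group⟩
  obtain ⟨l, hl, hlen, hp⟩ := Nat.sInf_mem hne
  refine ⟨l, ⟨hl, ?_⟩, ?_⟩
  · rw [hlen]; exact hδ
  · rw [← hp]; group

/-- Forward balls around the identity are finite. -/
lemma ball_finite' (S : Set Γ) (hSfin : S.Finite) (hSsym : ∀ s ∈ S, s⁻¹ ∈ S)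
    (hSgen : Subgroup.closure S = ⊤) (r : ℕ) :
    {δ : Γ | wordDist S 1 δ ≤ r}.Finite := by
  apply Set.Finite.subset
    (Set.Finite.image (fun l : List Γ => l.prod) (listset_finite S hSfin r))
  intro δ hδ
  have hne : {n | ∃ l : List Γ, (∀ s ∈ l, s ∈ S) ∧ l.length = n ∧ l.prod * 1 = δ}.Nonempty := by
    obtain ⟨l, hl, hp⟩ := exists_list_of_gen S hSsym hSgen δ
    exact ⟨l.length, l, hl, rfl, by rw [hp]; group⟩
  obtain ⟨l, hl, hlen, hp⟩ := Nat.sInf_mem hne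
  refine ⟨l, ⟨hl, ?_⟩, ?_⟩
  · rw [hlen]; exact hδ
  · rw [← hp]; group

/-- Windows of translates are translated windows. -/
lemma window_Lact (d : Γ → Γ → ℕ) (m : ℕ) (γ₀ γ : Γ) (z : Γ → CantorHeightSpace) :
    window d m (Lact γ₀ z) γ = window d m z (γ * γ₀) := by
  funext δ
  simp only [window, Lact, mul_assoc]

/-- Windows agree under local agreement of labels/heights. -/
lemma window_eq_of_agree (d : Γ → Γ → ℕ) (m : ℕ) (x y : Γ → CantorHeightSpace) (γ : Γ)
    (h : ∀ δ : Γ, d 1 δ ≤ m →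
      (∀ i < m, (x (δ * γ)).1 i = (y (δ * γ)).1 i) ∧ (x (δ * γ)).2 = (y (δ * γ)).2) :
    window d m x γ = window d m y γ := by
  funext δ
  unfold window
  split
  · next hδ =>
    obtain ⟨h1, h2⟩ := h δ hδ
    congr 1
    refine Prod.ext ?_ h2
    funext i
    by_cases hi : i < m <;> simp [hi, h1]
  · rfl

/-- Extraction of a translate of `z` agreeing with `x'` on a finite window. -/
lemma extract_translate (z x' : Γ → CantorHeightSpace)
    (hx' : x' ∈ orbitClosure z) (hx'fin : TotallyFinite x')
    (F : Set Γ) (hF : F.Finite) (m : ℕ) :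
    ∃ γ₀ : Γ, ∀ π ∈ F, (∀ i < m, (z (π * γ₀)).1 i = (x' π).1 i)
      ∧ (z (π * γ₀)).2 = (x' π).2 := by
  classical
  set U : Set (Γ → CantorHeightSpace) :=
    ⋂ π ∈ F, ({y | ∀ i < m, (y π).1 i = (x' π).1 i} ∩ {y | (y π).2 = (x' π).2}) with hU
  have hUopen : IsOpen U := by
    apply hF.isOpen_biInter
    intro π _
    apply IsOpen.inter
    · have : {y : Γ → CantorHeightSpace | ∀ i < m, (y π).1 i = (x' π).1 i}
        = ⋂ i ∈ Finset.range m, {y : Γ → CantorHeightSpace | (y π).1 i = (x' π).1 i} := by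
        ext y; simp
      rw [this]
      apply isOpen_biInter_finset
      intro i _
      show IsOpen ((fun y : Γ → CantorHeightSpace => (y π).1 i) ⁻¹' {(x' π).1 i})
      exact (isOpen_discrete _).preimage
        (((continuous_apply i).comp continuous_fst).comp (continuous_apply π))
    · obtain ⟨n, hn⟩ : ∃ n : ℕ, (x' π).2 = (n : OnePoint ℕ) := by
        cases h : (x' π).2 with
        | infty => exact absurd h (hx'fin π)
        | coe n => exact ⟨n, rfl⟩
      have hopen : IsOpen {((n : ℕ) : OnePoint ℕ)} := by
        have := OnePoint.isOpenEmbedding_coe (X := ℕ)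
        have : IsOpen ((fun k : ℕ => (k : OnePoint ℕ)) '' {n}) :=
          this.isOpenMap _ (isOpen_discrete _)
        simpa using this
      have : {y : Γ → CantorHeightSpace | (y π).2 = (x' π).2}
          = (fun y : Γ → CantorHeightSpace => (y π).2) ⁻¹' {((n : ℕ) : OnePoint ℕ)} := by
        ext y; simp [hn]
      rw [this]
      exact hopen.preimage (continuous_snd.comp (continuous_apply π))
  have hx'U : x' ∈ U := by
    rw [hU]
    exact Set.mem_iInter₂.mpr fun π _ => ⟨fun i _ => rfl, rfl⟩
  obtain ⟨y, hyU, γ₀, rfl⟩ := mem_closure_iff.mp hx' U hUopen hx'U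
  rw [hU] at hyU
  exact ⟨γ₀, fun π hπ => Set.mem_iInter₂.mp hyU π hπ⟩

end Aux

/-- if `z` is a proper landscape and `x'` is an element of totally finite
height in the orbit closure of `z`, then `K_z ⊆ K_{x'}`, `J_z ⊆ J_{x'}` and
`I_{x'} ⊆ I_z`. -/
theorem stmt14 {Γ : Type*} [Group Γ] (S : Set Γ)
    (hSfin : S.Finite) (hSsym : ∀ s ∈ S, s⁻¹ ∈ S) (hSgen : Subgroup.closure S = ⊤)
    (z x' : Γ → CantorHeightSpace)
    (hz : IsProperLandscape (wordDist S) z)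
    (hx' : x' ∈ orbitClosure z) (hx'fin : TotallyFinite x') :
    Kset (wordDist S) z ⊆ Kset (wordDist S) x' ∧
    Jset (wordDist S) z ⊆ Jset (wordDist S) x' ∧
    Iset (wordDist S) x' ⊆ Iset (wordDist S) z := by
  have hK : Kset (wordDist S) z ⊆ Kset (wordDist S) x' := by
    rintro ⟨m, W⟩ hB γ hwin
    obtain ⟨γ₀, hγ₀⟩ := extract_translate z x' hx' hx'fin
      ((fun ε => ε * γ) '' {ε | wordDist S 1 ε ≤ m})
      ((ball_finite' S hSfin hSsym hSgen m).image _) m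
    apply hB (γ * γ₀)
    rw [← window_Lact (wordDist S) m γ₀ γ z, ← hwin]
    apply window_eq_of_agree
    intro δ hδ
    exact hγ₀ (δ * γ) ⟨δ, hδ, rfl⟩
  have hJ : Jset (wordDist S) z ⊆ Jset (wordDist S) x' := by
    rintro ⟨m, W⟩ ⟨KB, hKB⟩
    refine ⟨KB, fun γ hγ1 => ?_⟩
    set F : Set Γ := Set.image2 (fun ε δ => ε * δ)
      {ε | wordDist S 1 ε ≤ m} {δ | wordDist S δ γ ≤ KB} ∪ {γ} with hF
    have hFfin : F.Finite :=
      (Set.Finite.image2 _ (ball_finite' S hSfin hSsym hSgen m)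
        (ball_finite S hSfin hSsym hSgen γ KB)).union (Set.finite_singleton γ)
    obtain ⟨γ₀, hγ₀⟩ := extract_translate z x' hx' hx'fin F hFfin m
    have hz1 : (z (γ * γ₀)).2 = ((1 : ℕ) : OnePoint ℕ) := by
      have := (hγ₀ γ (Or.inr rfl)).2
      rw [this, hγ1]
    obtain ⟨δ', hdist', hw⟩ := hKB (γ * γ₀) hz1
    have hdist : wordDist S (δ' * γ₀⁻¹) γ ≤ KB := by
      have h := wordDist_right_inv S (δ' * γ₀⁻¹) γ γ₀
      rw [← h]
      simpa using hdist'
    refine ⟨δ' * γ₀⁻¹, hdist, ?_⟩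
    have h1 : window (wordDist S) m x' (δ' * γ₀⁻¹)
        = window (wordDist S) m (Lact γ₀ z) (δ' * γ₀⁻¹) := by
      apply window_eq_of_agree
      intro ε hε
      have hmem : ε * (δ' * γ₀⁻¹) ∈ F :=
        Or.inl (Set.mem_image2.mpr ⟨ε, hε, δ' * γ₀⁻¹, hdist, rfl⟩)
      obtain ⟨hA, hB⟩ := hγ₀ _ hmem
      exact ⟨fun i hi => (hA i hi).symm, hB.symm⟩
    rw [h1, window_Lact]
    simpa using hw
  exact ⟨hK, hJ, Set.compl_subset_compl.mpr (Set.union_subset_union hK hJ)⟩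
end
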